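/- Let n be an even positive integer, F = 𝔽_{2^n}, R = W₂(F), and let f : F → F be a pseudo-planar function with f(0) = 0. Then for every g ∈ R, the number of ordered pairs (x,y) ∈ S₁ × S₁ with x + y = g equals: 1 if g ∈ S₃; 2 if g ∈ S₂; 2 if g ∈ S₄; and 0 otherwise. (In group-ring notation, S₁² = S₃ + 2·S₂ + 2·S₄.) -/

import Mathlib

open scoped Classical

noncomputable section

/-- The Galois ring `GR(4,n)`, realized as length-2 2-typical truncated Witt vectors
over `F = 𝔽_{2^n}`. -/
abbrev GR (n : ℕ) : Type := TruncatedWittVector 2 2 (GaloisField 2 n)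

/-- The truncated Teichmüller lift `τ : F → W₂(F)`. -/
def teich (n : ℕ) (x : GaloisField 2 n) : GR n :=
  WittVector.truncate 2 (WittVector.teichmuller 2 x)

/-- The lifted set `D_f = {τ(x) + 2·τ(f(x)^(2^(n-1))) : x ∈ F} ⊆ GR(4,n)`. -/
def Dset (n : ℕ) (f : GaloisField 2 n → GaloisField 2 n) : Set (GR n) :=
  {g | ∃ x : GaloisField 2 n, g = teich n x + 2 * teich n (f x ^ 2 ^ (n - 1))}

/-- `S₁ = D_f \ {0}`. -/
def S1 (n : ℕ) (f : GaloisField 2 n → GaloisField 2 n) : Set (GR n) :=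
  Dset n f \ {0}

/-- `S₂ = {−s : s ∈ S₁}`. -/
def S2 (n : ℕ) (f : GaloisField 2 n → GaloisField 2 n) : Set (GR n) :=
  (fun s => -s) '' S1 n f

/-- `S₃ = 2R \ {0}`. -/
def S3 (n : ℕ) : Set (GR n) :=
  {g | ∃ x : GR n, g = 2 * x} \ {0}

/-- `S₄`: the elements outside `S₀ ∪ S₁ ∪ S₂ ∪ S₃` appearing in the multiset `D_f²`. -/
def S4 (n : ℕ) (f : GaloisField 2 n → GaloisField 2 n) : Set (GR n) :=
  {g | g ∉ ({0} : Set (GR n)) ∪ S1 n f ∪ S2 n f ∪ S3 n ∧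
    ∃ x ∈ Dset n f, ∃ y ∈ Dset n f, g = x + y}

/-- `S₅`: the remaining elements. -/
def S5 (n : ℕ) (f : GaloisField 2 n → GaloisField 2 n) : Set (GR n) :=
  {g | g ∉ ({0} : Set (GR n)) ∪ S1 n f ∪ S2 n f ∪ S3 n ∪ S4 n f}


-- ===== auxiliary development =====
set_option linter.unusedSectionVars false
set_option linter.unusedVariables false
set_option maxHeartbeats 1000000

open MvPolynomial in
lemma wittAdd_two_one :
    WittVector.wittAdd 2 1 =
      (X (0,1) + X (1,1) - X (0,0) * X (1,0) : MvPolynomial (Fin 2 × ℕ) ℤ) := by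
  have h := wittStructureInt_prop 2 (X (0 : Fin 2) + X 1) 1
  rw [wittPolynomial_one] at h
  simp only [Nat.cast_ofNat, map_ofNat, map_add, map_mul, map_pow, bind₁_X_right, rename_X] at h
  have e1 : wittStructureInt 2 (X (0:Fin 2) + X 1) = WittVector.wittAdd 2 := rfl
  rw [e1, WittVector.wittAdd_zero 2] at h
  have h2 : (2 : MvPolynomial (Fin 2 × ℕ) ℤ) ≠ 0 := by norm_num
  apply mul_left_cancel₀ h2
  linear_combination h

section CharTwoField
variable {F : Type*} [Field F] [CharP F 2]

lemma wv_add_coeff_one (x y : WittVector 2 F) :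
    (x + y).coeff 1 = x.coeff 1 + y.coeff 1 + x.coeff 0 * y.coeff 0 := by
  rw [WittVector.add_coeff, wittAdd_two_one]
  simp [WittVector.peval, Function.uncurry, CharTwo.sub_eq_add]

abbrev R2 (F : Type*) [Field F] := TruncatedWittVector 2 2 F

namespace R2
/-- coordinates -/
def c0 (r : R2 F) : F := TruncatedWittVector.coeff 0 r
def c1 (r : R2 F) : F := TruncatedWittVector.coeff 1 r

lemma ext2 {r s : R2 F} (h0 : c0 r = c0 s) (h1 : c1 r = c1 s) : r = s := by
  apply TruncatedWittVector.ext
  intro i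
  fin_cases i <;> assumption

lemma c0_add (r s : R2 F) : c0 (r + s) = c0 r + c0 s := by
  obtain ⟨x, rfl⟩ := WittVector.truncate_surjective 2 2 F r
  obtain ⟨y, rfl⟩ := WittVector.truncate_surjective 2 2 F s
  rw [← map_add]
  simp only [c0, WittVector.coeff_truncate]
  exact WittVector.add_coeff_zero x y

lemma c1_add (r s : R2 F) : c1 (r + s) = c1 r + c1 s + c0 r * c0 s := by
  obtain ⟨x, rfl⟩ := WittVector.truncate_surjective 2 2 F r
  obtain ⟨y, rfl⟩ := WittVector.truncate_surjective 2 2 F s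
  rw [← map_add]
  simp only [c0, c1, WittVector.coeff_truncate]
  exact wv_add_coeff_one x y

@[simp] lemma c0_zero : c0 (0 : R2 F) = 0 := by
  simp [c0]

@[simp] lemma c1_zero : c1 (0 : R2 F) = 0 := by
  simp [c1]

lemma c0_two_mul (r : R2 F) : c0 (2 * r) = 0 := by
  rw [two_mul, c0_add, CharTwo.add_self_eq_zero]

lemma c1_two_mul (r : R2 F) : c1 (2 * r) = c0 r ^ 2 := by
  rw [two_mul, c1_add, CharTwo.add_self_eq_zero, zero_add, sq]

lemma c0_neg (r : R2 F) : c0 (-r) = c0 r := by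
  have h := c0_add r (-r)
  rw [add_neg_cancel, c0_zero] at h
  have h2 : R2.c0 (-r) = - R2.c0 r := by linear_combination -h
  rw [h2, CharTwo.neg_eq]

lemma c1_neg (r : R2 F) : c1 (-r) = c1 r + c0 r ^ 2 := by
  have h := c1_add r (-r)
  rw [add_neg_cancel, c1_zero, c0_neg] at h
  have h2 : c1 (-r) = - c1 r - c0 r * c0 r := by linear_combination -h
  rw [h2]
  rw [CharTwo.neg_eq, CharTwo.sub_eq_add, sq]

end R2
end CharTwoField


private lemma one_le_sq_of_ne_zero {a : ℤ} (h : a ≠ 0) : 1 ≤ a ^ 2 := by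
  rcases lt_or_gt_of_ne h with h'|h'
  · nlinarith [mul_self_nonneg (a+1)]
  · nlinarith [mul_self_nonneg (a-1)]

/-- descent: a² + b² = 2^m, m even ⟹ a = 0 ∨ b = 0. -/
lemma gauss_two_pow : ∀ m : ℕ, ∀ a b : ℤ, a^2 + b^2 = 2^m →
    (Even m → a = 0 ∨ b = 0) ∧ (¬ Even m → a = b ∨ a = -b) := by
  intro m
  induction m with
  | zero =>
    intro a b h
    refine ⟨fun _ => ?_, fun h0 => absurd Even.zero h0⟩
    by_contra hc
    push_neg at hc
    have h1 := one_le_sq_of_ne_zero hc.1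
    have h2 := one_le_sq_of_ne_zero hc.2
    omega
  | succ m ih =>
    intro a b h
    have hab : Even (a + b) := by
      have h2 : Even (a^2 + b^2) := by
        rw [h]; exact ⟨2^m, by rw [pow_succ]; ring⟩
      have h3 : Even ((a+b)^2) := by
        have : (a+b)^2 = (a^2+b^2) + 2*(a*b) := by ring
        rw [this]; exact h2.add (even_two_mul _)
      exact (Int.even_pow.mp h3).1
    obtain ⟨u, hu⟩ := hab
    have hab2 : Even (a - b) := ⟨u - b, by omega⟩
    obtain ⟨v, hv⟩ := hab2
    have ha : a = u + v := by omega
    have hb : b = u - v := by omega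
    have huv : u^2 + v^2 = 2^m := by
      have h2 : (2:ℤ) * (u^2 + v^2) = 2 * 2^m := by
        rw [show (2:ℤ) * 2^m = 2^(m+1) from (pow_succ' 2 m).symm, ← h, ha, hb]; ring
      linarith
    obtain ⟨he, ho⟩ := ih u v huv
    constructor
    · intro hev
      have hmodd : ¬ Even m := by
        rcases hev with ⟨k, hk⟩
        intro ⟨j, hj⟩; omega
      rcases ho hmodd with h'|h'
      · right; omega
      · left; omega
    · intro hodd
      have hmev : Even m := by
        rcases Nat.even_or_odd m with h'|h'
        · exact h'
        · exfalso; exact hodd (by rcases h' with ⟨k, hk⟩; exact ⟨k+1, by omega⟩)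
      rcases he hmev with h'|h'
      · subst h'; right; omega
      · subst h'; left; omega



attribute [simp] R2.c0_add R2.c1_add R2.c0_zero R2.c1_zero R2.c0_two_mul R2.c1_two_mul R2.c0_neg R2.c1_neg

lemma gauss_two_pow' {m : ℕ} {a b : ℤ} (h : a^2 + b^2 = 2^m) (hm : Even m) :
    a = 0 ∨ b = 0 := (gauss_two_pow m a b h).1 hm

section GF
variable {n : ℕ}

instance instFintypeFq : Fintype (GaloisField 2 n) := Fintype.ofFinite _

lemma cardFq (hn : n ≠ 0) : Fintype.card (GaloisField 2 n) = 2 ^ n := by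
  rw [← Nat.card_eq_fintype_card]; exact GaloisField.card 2 n hn

lemma sqrt_sq (hn : n ≠ 0) (b : GaloisField 2 n) : (b ^ 2 ^ (n-1)) ^ 2 = b := by
  rw [← pow_mul]
  have h : 2 ^ (n-1) * 2 = 2 ^ n := by
    rw [← pow_succ, Nat.sub_add_cancel (Nat.one_le_iff_ne_zero.2 hn)]
  rw [h, ← cardFq hn, FiniteField.pow_card]

@[simp] lemma c0_teich (x : GaloisField 2 n) : R2.c0 (teich n x) = x := by
  simp [teich, R2.c0, WittVector.coeff_truncate, WittVector.teichmuller_coeff_zero]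

@[simp] lemma c1_teich (x : GaloisField 2 n) : R2.c1 (teich n x) = 0 := by
  have := WittVector.teichmuller_coeff_pos 2 (R := GaloisField 2 n) x 1 (by norm_num)
  simp [teich, R2.c1, WittVector.coeff_truncate, this]

variable (f : GaloisField 2 n → GaloisField 2 n)

/-- `d(x) = τ(x) + 2 τ(√(f x))`, syntactically matching `Dset`. -/
def dd (x : GaloisField 2 n) : GR n := teich n x + 2 * teich n (f x ^ 2 ^ (n - 1))

@[simp] lemma c0_dd (x : GaloisField 2 n) : R2.c0 (dd f x) = x := by
  simp [dd]

lemma c1_dd (hn : n ≠ 0) (x : GaloisField 2 n) : R2.c1 (dd f x) = f x := by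
  simp [dd, sqrt_sq hn]

/-- normal form `mk2 a b` with coordinates `(a, b)` -/
def mk2 (a b : GaloisField 2 n) : GR n := teich n a + 2 * teich n (b ^ 2 ^ (n - 1))

@[simp] lemma c0_mk2 (a b : GaloisField 2 n) : R2.c0 (mk2 a b) = a := by
  simp [mk2]

lemma c1_mk2 (hn : n ≠ 0) (a b : GaloisField 2 n) : R2.c1 (mk2 a b) = b := by
  simp [mk2, sqrt_sq hn]

lemma dd_zero (hn : n ≠ 0) (hf0 : f 0 = 0) : dd f 0 = 0 := by
  apply R2.ext2 <;> simp [c1_dd f hn, hf0]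

lemma char2Fq : (2 : GaloisField 2 n) = 0 := CharTwo.two_eq_zero

/-- Key 2-to-1 lemma from pseudo-planarity. -/
lemma two_to_one
    (hpp : ∀ ε : GaloisField 2 n, ε ≠ 0 →
      Function.Bijective (fun x => f (x + ε) + f x + ε * x))
    {a b c e : GaloisField 2 n} (hab : a + b ≠ 0) (h1 : a + b = c + e)
    (h2 : f a + f b + a * b = f c + f e + c * e) :
    (c = a ∧ e = b) ∨ (c = b ∧ e = a) := by
  have h2' : (2 : GaloisField 2 n) = 0 := char2Fq
  have he : e = a + b + c := by linear_combination -h1 - c * h2'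
  by_cases hca : c = a
  · left; refine ⟨hca, ?_⟩; rw [he, hca]; linear_combination a * h2'
  by_cases hcb : c = b
  · right; refine ⟨hcb, ?_⟩; rw [he, hcb]; linear_combination b * h2'
  exfalso
  set η := b + c with hη
  have hηne : η ≠ 0 := fun h => hcb (by linear_combination h - b * h2')
  have key : f (a + η) + f a + η * a = f (c + η) + f c + η * c := by
    have ha : a + η = a + b + c := by rw [hη]; ring
    have hc : c + η = b := by rw [hη]; linear_combination c * h2'
    rw [he] at h2
    rw [ha, hc]
    linear_combination -h2 + (f a - f c + a*b - b*c - c*c) * h2'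
  have := (hpp η hηne).injective (a₁ := a) (a₂ := c) key
  exact hca this.symm
end GF


section Fourier
open Complex
variable {n : ℕ} (f : GaloisField 2 n → GaloisField 2 n)

/-- `R` has exponent dividing 4. -/
lemma four_torsion (r : GR n) : r + r + (r + r) = 0 := by
  have h0 : R2.c0 (r + r) = 0 := by
    rw [R2.c0_add, CharTwo.add_self_eq_zero]
  apply R2.ext2
  · rw [R2.c0_add, h0, add_zero, R2.c0_zero]
  · rw [R2.c1_add, h0, mul_zero, add_zero, CharTwo.add_self_eq_zero, R2.c1_zero]

lemma chi_pow_four (χ : AddChar (GR n) ℂ) (r : GR n) : χ r ^ 4 = 1 := by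
  have : χ (r + r + (r + r)) = χ r ^ 4 := by
    rw [AddChar.map_add_eq_mul, AddChar.map_add_eq_mul]; ring
  rw [four_torsion] at this
  rw [← this, AddChar.map_zero_eq_one]

lemma chi_gaussian (χ : AddChar (GR n) ℂ) (r : GR n) :
    ∃ a b : ℤ, χ r = (a : ℂ) + (b : ℂ) * Complex.I := by
  have h4 := chi_pow_four χ r
  have hfact : (χ r ^ 2 - 1) * (χ r ^ 2 + 1) = 0 := by linear_combination h4
  rcases mul_eq_zero.mp hfact with h|h
  · have : (χ r - 1) * (χ r + 1) = 0 := by linear_combination h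
    rcases mul_eq_zero.mp this with h'|h'
    · exact ⟨1, 0, by push_cast; linear_combination h'⟩
    · exact ⟨-1, 0, by push_cast; linear_combination h'⟩
  · have : (χ r - Complex.I) * (χ r + Complex.I) = 0 := by
      linear_combination h - Complex.I_sq * 1
    rcases mul_eq_zero.mp this with h'|h'
    · exact ⟨0, 1, by push_cast; linear_combination h'⟩
    · exact ⟨0, -1, by push_cast; linear_combination h'⟩

/-- The character sum over `D`. -/
def Sg (χ : AddChar (GR n) ℂ) : ℂ := ∑ x : GaloisField 2 n, χ (dd f x)

lemma Sg_gaussian (χ : AddChar (GR n) ℂ) :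
    ∃ a b : ℤ, Sg f χ = (a : ℂ) + (b : ℂ) * Complex.I := by
  unfold Sg
  classical
  refine Finset.sum_induction _ (fun z => ∃ a b : ℤ, z = (a:ℂ) + (b:ℂ)*Complex.I) ?_ ⟨0,0, by simp⟩ ?_
  · rintro u v ⟨a,b,rfl⟩ ⟨c,e,rfl⟩
    exact ⟨a+c, b+e, by push_cast; ring⟩
  · intro x _
    exact chi_gaussian χ (dd f x)

lemma conj_Sg (χ : AddChar (GR n) ℂ) :
    (starRingEnd ℂ) (Sg f χ) = ∑ x : GaloisField 2 n, χ (-(dd f x)) := by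
  unfold Sg
  rw [map_sum]
  refine Finset.sum_congr rfl fun x _ => ?_
  rw [AddChar.map_neg_eq_inv, AddChar.inv_apply_eq_conj]
end Fourier

section Fourier2
open Finset
variable {n : ℕ} (f : GaloisField 2 n → GaloisField 2 n)

/-- inverse of the pseudo-planarity bijection -/
def gi (ε c : GaloisField 2 n) : GaloisField 2 n :=
  Function.invFun (fun x => f (x + ε) + f x + ε * x) c

lemma gi_right (hpp : ∀ ε : GaloisField 2 n, ε ≠ 0 →
      Function.Bijective (fun x => f (x + ε) + f x + ε * x)) {ε : GaloisField 2 n} (hε : ε ≠ 0) (c : GaloisField 2 n) :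
    f (gi f ε c + ε) + f (gi f ε c) + ε * gi f ε c = c :=
  Function.rightInverse_invFun (hpp ε hε).surjective c

lemma gi_left (hpp : ∀ ε : GaloisField 2 n, ε ≠ 0 →
      Function.Bijective (fun x => f (x + ε) + f x + ε * x)) {ε : GaloisField 2 n} (hε : ε ≠ 0) (y : GaloisField 2 n) :
    gi f ε (f (y + ε) + f y + ε * y) = y :=
  Function.leftInverse_invFun (hpp ε hε).injective y

lemma c0_dd_sub (x y : GaloisField 2 n) : R2.c0 (dd f x - dd f y) = x + y := by
  rw [sub_eq_add_neg, R2.c0_add, R2.c0_neg, c0_dd, c0_dd]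

lemma c1_dd_sub (hn : n ≠ 0) (x y : GaloisField 2 n) :
    R2.c1 (dd f x - dd f y) = f ((x + y) + y) + f y + (x + y) * y := by
  rw [sub_eq_add_neg, R2.c1_add, R2.c1_neg, c1_dd f hn, c1_dd f hn, R2.c0_neg, c0_dd, c0_dd]
  have h2 : (2 : GaloisField 2 n) = 0 := char2Fq
  have hx : x + y + y = x := by linear_combination y * h2
  rw [hx]
  ring

lemma add_ne_zero_of_ne {x y : GaloisField 2 n} (h : x ≠ y) : x + y ≠ 0 := by
  intro hc
  apply h
  have h2 : (2 : GaloisField 2 n) = 0 := char2Fq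
  linear_combination hc - y * h2

/-- The norm of the character sum. -/
lemma normSg (hn : n ≠ 0)
    (hpp : ∀ ε : GaloisField 2 n, ε ≠ 0 →
      Function.Bijective (fun x => f (x + ε) + f x + ε * x))
    (χ : AddChar (GR n) ℂ) (hχ : χ ≠ 0) :
    Sg f χ * (starRingEnd ℂ) (Sg f χ) =
      (2^n : ℂ) - ∑ b : GaloisField 2 n, χ (mk2 0 b) := by
  rw [conj_Sg, Sg, Finset.sum_mul_sum]
  have hterm : ∀ x y : GaloisField 2 n, χ (dd f x) * χ (-(dd f y)) = χ (dd f x - dd f y) := by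
    intro x y; rw [← AddChar.map_add_eq_mul, sub_eq_add_neg]
  simp_rw [hterm]
  rw [← Fintype.sum_prod_type']
  rw [← Finset.sum_filter_add_sum_filter_not Finset.univ
    (fun p : GaloisField 2 n × GaloisField 2 n => p.1 = p.2)]
  have h2 : (2 : GaloisField 2 n) = 0 := char2Fq
  have hdiag : ∑ p ∈ Finset.univ.filter
      (fun p : GaloisField 2 n × GaloisField 2 n => p.1 = p.2),
      χ (dd f p.1 - dd f p.2) = (2^n : ℂ) := by
    have h1 : ∑ p ∈ Finset.univ.filter
        (fun p : GaloisField 2 n × GaloisField 2 n => p.1 = p.2),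
        χ (dd f p.1 - dd f p.2) = ∑ _x : GaloisField 2 n, (1:ℂ) := by
      refine Finset.sum_nbij' (i := fun p : GaloisField 2 n × GaloisField 2 n => p.1)
        (j := fun x : GaloisField 2 n => (x, x)) (fun a _ => Finset.mem_univ _)
        (fun a _ => by simp) ?_ (fun a _ => rfl) ?_
      · intro a ha
        obtain h := (Finset.mem_filter.mp ha).2
        exact Prod.ext rfl h
      · intro a ha
        obtain h := (Finset.mem_filter.mp ha).2
        rw [h, sub_self, AddChar.map_zero_eq_one]
    rw [h1, Finset.sum_const, Finset.card_univ, cardFq hn, nsmul_eq_mul, mul_one]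
    push_cast; ring
  have hoff : ∑ p ∈ Finset.univ.filter
      (fun p : GaloisField 2 n × GaloisField 2 n => ¬ p.1 = p.2),
      χ (dd f p.1 - dd f p.2)
      = ∑ r ∈ Finset.univ.filter (fun r : GR n => R2.c0 r ≠ 0), χ r := by
    refine Finset.sum_nbij'
      (i := fun p : GaloisField 2 n × GaloisField 2 n => dd f p.1 - dd f p.2)
      (j := fun r : GR n => (gi f (R2.c0 r) (R2.c1 r) + R2.c0 r, gi f (R2.c0 r) (R2.c1 r)))
      ?_ ?_ ?_ ?_ ?_
    · intro p hp
      rw [Finset.mem_filter] at hp ⊢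
      refine ⟨Finset.mem_univ _, ?_⟩
      rw [c0_dd_sub]
      exact add_ne_zero_of_ne hp.2
    · intro r hr
      rw [Finset.mem_filter] at hr ⊢
      refine ⟨Finset.mem_univ _, ?_⟩
      dsimp only
      intro hc
      exact hr.2 (by linear_combination hc)
    · intro p hp
      rw [Finset.mem_filter] at hp
      have hε : p.1 + p.2 ≠ 0 := add_ne_zero_of_ne hp.2
      have e0 : R2.c0 (dd f p.1 - dd f p.2) = p.1 + p.2 := c0_dd_sub f p.1 p.2
      have e1 : R2.c1 (dd f p.1 - dd f p.2)
          = f (p.2 + (p.1 + p.2)) + f p.2 + (p.1 + p.2) * p.2 := by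
        rw [c1_dd_sub f hn]
        have h3 : p.1 + p.2 + p.2 = p.2 + (p.1 + p.2) := by ring
        rw [h3]
      have egi : gi f (p.1 + p.2) (R2.c1 (dd f p.1 - dd f p.2)) = p.2 := by
        rw [e1]; exact gi_left f hpp hε p.2
      rw [e0, egi]
      have h4 : p.2 + (p.1 + p.2) = p.1 := by linear_combination p.2 * h2
      rw [h4]
    · intro r hr
      rw [Finset.mem_filter] at hr
      dsimp only
      set ε := R2.c0 r with hε
      set w := gi f ε (R2.c1 r) with hw
      apply R2.ext2
      · rw [c0_dd_sub]
        rw [show w + ε + w = ε by linear_combination w * h2]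
      · rw [c1_dd_sub f hn]
        rw [show w + ε + w = ε by linear_combination w * h2]
        rw [show ε + w = w + ε by ring]
        exact gi_right f hpp hr.2 (R2.c1 r)
    · intro p _; rfl
  rw [hdiag, hoff]
  have hsplit := Finset.sum_filter_add_sum_filter_not Finset.univ
    (fun r : GR n => R2.c0 r ≠ 0) (fun r => χ r)
  have htot : ∑ r : GR n, χ r = 0 := AddChar.sum_eq_zero_iff_ne_zero.mpr hχ
  have hz : ∑ r ∈ Finset.univ.filter (fun r : GR n => ¬ R2.c0 r ≠ 0), χ r
      = ∑ b : GaloisField 2 n, χ (mk2 0 b) := by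
    refine Finset.sum_nbij' (i := fun r : GR n => R2.c1 r)
      (j := fun b : GaloisField 2 n => mk2 0 b)
      (fun a _ => Finset.mem_univ _) ?_ ?_ ?_ ?_
    · intro b _
      rw [Finset.mem_filter]
      refine ⟨Finset.mem_univ _, ?_⟩
      push_neg
      rw [c0_mk2]
    · intro r hr
      rw [Finset.mem_filter] at hr
      push_neg at hr
      apply R2.ext2
      · rw [c0_mk2, hr.2]
      · rw [c1_mk2 hn]
    · intro b _
      rw [c1_mk2 hn]
    · intro r hr
      rw [Finset.mem_filter] at hr
      push_neg at hr
      congr 1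
      apply R2.ext2
      · rw [c0_mk2, hr.2]
      · rw [c1_mk2 hn]
  rw [hz] at hsplit
  have hfin : ∑ r ∈ Finset.univ.filter (fun r : GR n => R2.c0 r ≠ 0), χ r
      = - ∑ b : GaloisField 2 n, χ (mk2 0 b) := by
    linear_combination hsplit + htot
  rw [hfin]
  ring
end Fourier2

section Fourier3
open Finset
variable {n : ℕ} (f : GaloisField 2 n → GaloisField 2 n)

lemma Zsum_cases (hn : n ≠ 0) (χ : AddChar (GR n) ℂ) :
    (∑ b : GaloisField 2 n, χ (mk2 0 b)) = 0 ∨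
    (∑ b : GaloisField 2 n, χ (mk2 0 b)) = (2^n : ℂ) := by
  have hadd : ∀ a b : GaloisField 2 n, mk2 (n := n) 0 (a + b) = mk2 0 a + mk2 0 b := by
    intro a b
    apply R2.ext2
    · rw [R2.c0_add, c0_mk2, c0_mk2, c0_mk2, add_zero]
    · rw [R2.c1_add, c1_mk2 hn, c1_mk2 hn, c1_mk2 hn, c0_mk2, c0_mk2, mul_zero, add_zero]
  let ι : GaloisField 2 n →+ GR n := AddMonoidHom.mk' (fun b => mk2 0 b) hadd
  let ψ : AddChar (GaloisField 2 n) ℂ := χ.compAddMonoidHom ι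
  have hψ : ∀ b, ψ b = χ (mk2 0 b) := fun b => rfl
  by_cases h : ψ = 0
  · right
    have h1 : ∀ b : GaloisField 2 n, χ (mk2 0 b) = 1 := by
      intro b; rw [← hψ, h]; exact AddChar.zero_apply b
    rw [Finset.sum_congr rfl (fun b _ => h1 b), Finset.sum_const, Finset.card_univ,
      cardFq hn, nsmul_eq_mul, mul_one]
    push_cast; ring
  · left
    have := AddChar.sum_eq_zero_iff_ne_zero.mpr h
    rw [← this]
    exact Finset.sum_congr rfl fun b _ => (hψ b).symm

lemma SgSq_real (hn : n ≠ 0) (heven : Even n)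
    (hpp : ∀ ε : GaloisField 2 n, ε ≠ 0 →
      Function.Bijective (fun x => f (x + ε) + f x + ε * x))
    (χ : AddChar (GR n) ℂ) :
    (starRingEnd ℂ) (Sg f χ ^ 2) = Sg f χ ^ 2 := by
  by_cases hχ : χ = 0
  · subst hχ
    have : Sg f (0 : AddChar (GR n) ℂ) = (2^n : ℂ) := by
      unfold Sg
      rw [Finset.sum_congr rfl (fun x _ => AddChar.zero_apply _), Finset.sum_const,
        Finset.card_univ, cardFq hn, nsmul_eq_mul, mul_one]
      push_cast; ring
    rw [this, map_pow]
    congr 1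
    rw [show ((2:ℂ)^n) = ((2^n : ℕ) : ℂ) by push_cast; ring, Complex.conj_natCast]
  obtain ⟨a, b, hS⟩ := Sg_gaussian f χ
  have hconj : (starRingEnd ℂ) (Sg f χ) = (a : ℂ) - (b : ℂ) * Complex.I := by
    rw [hS, map_add, map_mul, Complex.conj_I, map_intCast, map_intCast]
    ring
  have hnorm := normSg f hn hpp χ hχ
  rcases Zsum_cases hn χ with h0|h0
  · rw [h0, sub_zero] at hnorm
    have hab : (a : ℂ)^2 + (b : ℂ)^2 = ((2:ℂ))^n := by
      rw [hconj, hS] at hnorm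
      have hI := Complex.I_sq
      linear_combination hnorm + (b:ℂ)^2 * hI
    have habZ : a^2 + b^2 = 2^n := by
      have : ((a^2 + b^2 : ℤ) : ℂ) = (((2^n : ℤ)) : ℂ) := by push_cast; linear_combination hab
      exact_mod_cast this
    have hab0 : (a : ℂ) * (b : ℂ) = 0 := by
      rcases gauss_two_pow' habZ heven with h|h <;> rw [h] <;> push_cast <;> ring
    rw [map_pow, hconj, hS]
    linear_combination (-4*Complex.I) * hab0
  · rw [h0, sub_self] at hnorm
    have hzero : Sg f χ = 0 := by
      have h1 : Complex.normSq (Sg f χ) = 0 := by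
        have := Complex.mul_conj (Sg f χ)
        rw [hnorm] at this
        exact_mod_cast this.symm
      exact Complex.normSq_eq_zero.mp h1
    rw [hzero]
    simp

/-- Number of ordered representations of `g` as `d(x) + d(y)` (over all of `F²`). -/
def Ncount (g : GR n) : ℕ :=
  (Finset.univ.filter
    (fun p : GaloisField 2 n × GaloisField 2 n => dd f p.1 + dd f p.2 = g)).card

lemma Ncount_fourier (g : GR n) :
    ((Fintype.card (GR n) : ℂ)) * (Ncount f g : ℂ)
      = ∑ χ : AddChar (GR n) ℂ, χ (-g) * Sg f χ ^ 2 := by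
  have e1 : ∀ χ : AddChar (GR n) ℂ, χ (-g) * Sg f χ ^ 2
      = ∑ p : GaloisField 2 n × GaloisField 2 n, χ (dd f p.1 + dd f p.2 + -g) := by
    intro χ
    rw [sq, Sg, Finset.sum_mul_sum]
    rw [← Fintype.sum_prod_type']
    rw [Finset.mul_sum]
    refine Finset.sum_congr rfl fun p _ => ?_
    rw [AddChar.map_add_eq_mul, AddChar.map_add_eq_mul]
    ring
  rw [Finset.sum_congr rfl (fun χ _ => e1 χ)]
  rw [Finset.sum_comm]
  have e2 : ∀ p : GaloisField 2 n × GaloisField 2 n,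
      ∑ χ : AddChar (GR n) ℂ, χ (dd f p.1 + dd f p.2 + -g)
      = if dd f p.1 + dd f p.2 + -g = 0 then (Fintype.card (GR n) : ℂ) else 0 :=
    fun p => AddChar.sum_apply_eq_ite _
  rw [Finset.sum_congr rfl (fun p _ => e2 p)]
  have e3 : ∀ p : GaloisField 2 n × GaloisField 2 n,
      (dd f p.1 + dd f p.2 + -g = 0) = (dd f p.1 + dd f p.2 = g) := by
    intro p
    apply propext
    constructor
    · intro h; have := add_eq_zero_iff_eq_neg.mp h; rw [this]; ring
    · intro h; rw [h]; ring
  simp_rw [e3]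
  rw [Finset.sum_ite, Finset.sum_const, Finset.sum_const_zero, add_zero, nsmul_eq_mul]
  rw [Ncount]
  ring
end Fourier3

section Fourier4
open Finset
variable {n : ℕ} (f : GaloisField 2 n → GaloisField 2 n)

lemma Ncount_symm (hn : n ≠ 0) (heven : Even n)
    (hpp : ∀ ε : GaloisField 2 n, ε ≠ 0 →
      Function.Bijective (fun x => f (x + ε) + f x + ε * x))
    (g : GR n) : Ncount f g = Ncount f (-g) := by
  have h1 := Ncount_fourier f g
  have h2 := Ncount_fourier f (-g)
  rw [neg_neg] at h2
  have hconj : (starRingEnd ℂ) ((Fintype.card (GR n) : ℂ) * (Ncount f g : ℂ))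
      = (Fintype.card (GR n) : ℂ) * (Ncount f g : ℂ) := by
    rw [map_mul, Complex.conj_natCast, Complex.conj_natCast]
  have key : (Fintype.card (GR n) : ℂ) * (Ncount f g : ℂ)
      = (Fintype.card (GR n) : ℂ) * (Ncount f (-g) : ℂ) := by
    calc (Fintype.card (GR n) : ℂ) * (Ncount f g : ℂ)
        = (starRingEnd ℂ) ((Fintype.card (GR n) : ℂ) * (Ncount f g : ℂ)) := hconj.symm
      _ = (starRingEnd ℂ) (∑ χ : AddChar (GR n) ℂ, χ (-g) * Sg f χ ^ 2) := by rw [h1]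
      _ = ∑ χ : AddChar (GR n) ℂ, χ g * Sg f χ ^ 2 := by
          rw [map_sum]
          refine Finset.sum_congr rfl fun χ _ => ?_
          rw [map_mul, SgSq_real f hn heven hpp χ]
          congr 1
          rw [← AddChar.inv_apply_eq_conj, AddChar.map_neg_eq_inv, inv_inv]
      _ = (Fintype.card (GR n) : ℂ) * (Ncount f (-g) : ℂ) := h2.symm
  have hcard : (Fintype.card (GR n) : ℂ) ≠ 0 :=
    Nat.cast_ne_zero.mpr Fintype.card_ne_zero
  exact_mod_cast mul_left_cancel₀ hcard key

lemma exists_S2_rep (hn : n ≠ 0) (heven : Even n)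
    (hpp : ∀ ε : GaloisField 2 n, ε ≠ 0 →
      Function.Bijective (fun x => f (x + ε) + f x + ε * x))
    (hf0 : f 0 = 0) {z : GaloisField 2 n} (hz : z ≠ 0) :
    ∃ x y : GaloisField 2 n, x ≠ 0 ∧ y ≠ 0 ∧ dd f x + dd f y = - dd f z := by
  have hpos : 0 < Ncount f (dd f z) := by
    rw [Ncount]
    apply Finset.card_pos.mpr
    refine ⟨((0 : GaloisField 2 n), z), ?_⟩
    rw [Finset.mem_filter]
    exact ⟨Finset.mem_univ _, by rw [dd_zero f hn hf0, zero_add]⟩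
  have hsymm := Ncount_symm f hn heven hpp (dd f z)
  rw [hsymm] at hpos
  rw [Ncount] at hpos
  obtain ⟨p, hp⟩ := Finset.card_pos.mp hpos
  rw [Finset.mem_filter] at hp
  have hsum : dd f p.1 + dd f p.2 = - dd f z := hp.2
  have haux : ∀ w : GaloisField 2 n, dd f w = - dd f z → False := by
    intro w hw
    have e0 : w = z := by
      have := congrArg R2.c0 hw
      rwa [c0_dd, R2.c0_neg, c0_dd] at this
    have e1 : f w = f z + z^2 := by
      have := congrArg R2.c1 hw
      rwa [c1_dd f hn, R2.c1_neg, c1_dd f hn, c0_dd] at this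
    rw [e0] at e1
    have : z^2 = 0 := by linear_combination -e1
    exact hz (by
      exact pow_eq_zero_iff (n := 2) (by norm_num) |>.mp this)
  have hx : p.1 ≠ 0 := by
    intro h0
    rw [h0, dd_zero f hn hf0, zero_add] at hsum
    exact haux p.2 hsum
  have hy : p.2 ≠ 0 := by
    intro h0
    rw [h0, dd_zero f hn hf0, add_zero] at hsum
    exact haux p.1 hsum
  exact ⟨p.1, p.2, hx, hy, hsum⟩
end Fourier4

-- ===== final assembly =====

section Assembly
open Finset
variable {n : ℕ} (f : GaloisField 2 n → GaloisField 2 n)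

lemma dd_mem_Dset (x : GaloisField 2 n) : dd f x ∈ Dset n f := ⟨x, rfl⟩

lemma dd_ne_zero {x : GaloisField 2 n} (hx : x ≠ 0) : dd f x ≠ 0 := by
  intro h
  apply hx
  have h0 := congrArg R2.c0 h
  rwa [c0_dd, R2.c0_zero] at h0

lemma dd_inj {a b : GaloisField 2 n} (h : dd f a = dd f b) : a = b := by
  have h0 := congrArg R2.c0 h
  rwa [c0_dd, c0_dd] at h0

lemma mem_S1_iff (hn : n ≠ 0) (hf0 : f 0 = 0) {r : GR n} :
    r ∈ S1 n f ↔ ∃ x, x ≠ 0 ∧ r = dd f x := by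
  constructor
  · rintro ⟨⟨x, rfl⟩, hne⟩
    refine ⟨x, ?_, rfl⟩
    intro h0
    apply hne
    subst h0
    have : dd f 0 = 0 := dd_zero f hn hf0
    rw [show (teich n 0 + 2 * teich n (f 0 ^ 2 ^ (n - 1))) = dd f 0 from rfl, this]
    rfl
  · rintro ⟨x, hx, rfl⟩
    exact ⟨⟨x, rfl⟩, fun hc => dd_ne_zero f hx hc⟩

lemma mem_S3_iff (hn : n ≠ 0) {g : GR n} : g ∈ S3 n ↔ (R2.c0 g = 0 ∧ g ≠ 0) := by
  constructor
  · rintro ⟨⟨x, rfl⟩, hne⟩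
    exact ⟨R2.c0_two_mul x, fun hc => hne hc⟩
  · rintro ⟨h0, hne⟩
    refine ⟨⟨mk2 ((R2.c1 g) ^ 2 ^ (n-1)) 0, ?_⟩, fun hc => hne hc⟩
    apply R2.ext2
    · rw [R2.c0_two_mul, h0]
    · rw [R2.c1_two_mul, c0_mk2, sqrt_sq hn]

lemma c0_dd_add (x y : GaloisField 2 n) : R2.c0 (dd f x + dd f y) = x + y := by simp

lemma c1_dd_add (hn : n ≠ 0) (x y : GaloisField 2 n) :
    R2.c1 (dd f x + dd f y) = f x + f y + x * y := by
  rw [R2.c1_add, c1_dd f hn, c1_dd f hn, c0_dd, c0_dd]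

/-- the solution set for a genuinely off-diagonal representation -/
lemma pair_set (hn : n ≠ 0)
    (hpp : ∀ ε : GaloisField 2 n, ε ≠ 0 →
      Function.Bijective (fun x => f (x + ε) + f x + ε * x))
    (hf0 : f 0 = 0) {x y : GaloisField 2 n} {g : GR n}
    (hx : x ≠ 0) (hy : y ≠ 0) (hxy : x ≠ y) (hg : dd f x + dd f y = g) :
    {p : GR n × GR n | p.1 ∈ S1 n f ∧ p.2 ∈ S1 n f ∧ p.1 + p.2 = g}
      = {(dd f x, dd f y), (dd f y, dd f x)} := by
  ext p
  simp only [Set.mem_setOf_eq, Set.mem_insert_iff, Set.mem_singleton_iff]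
  constructor
  · rintro ⟨h1, h2, hsum⟩
    obtain ⟨a, ha, e1⟩ := (mem_S1_iff f hn hf0).mp h1
    obtain ⟨b, hb, e2⟩ := (mem_S1_iff f hn hf0).mp h2
    have hps : p = (dd f a, dd f b) := Prod.ext e1 e2
    rw [e1, e2] at hsum
    have hy2 : dd f a + dd f b = dd f x + dd f y := hsum.trans hg.symm
    have hc0 : x + y = a + b := by
      have h' := congrArg R2.c0 hy2
      rw [c0_dd_add, c0_dd_add] at h'
      exact h'.symm
    have hc1 : f x + f y + x * y = f a + f b + a * b := by
      have h' := congrArg R2.c1 hy2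
      rw [c1_dd_add f hn, c1_dd_add f hn] at h'
      exact h'.symm
    have hne : x + y ≠ 0 := add_ne_zero_of_ne hxy
    rcases two_to_one f hpp hne hc0 hc1 with ⟨rfl, rfl⟩ | ⟨rfl, rfl⟩
    · left; exact hps
    · right; exact hps
  · rintro (hp | hp) <;> rw [hp]
    · exact ⟨(mem_S1_iff f hn hf0).mpr ⟨x, hx, rfl⟩,
        (mem_S1_iff f hn hf0).mpr ⟨y, hy, rfl⟩, hg⟩
    · exact ⟨(mem_S1_iff f hn hf0).mpr ⟨y, hy, rfl⟩,
        (mem_S1_iff f hn hf0).mpr ⟨x, hx, rfl⟩, by rw [add_comm]; exact hg⟩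

lemma pair_ncard {x y : GaloisField 2 n} (hxy : x ≠ y) :
    ({(dd f x, dd f y), (dd f y, dd f x)} : Set (GR n × GR n)).ncard = 2 := by
  apply Set.ncard_pair
  intro h
  exact hxy (dd_inj f (congrArg Prod.fst h))

end Assembly

/-- **Lemma (`S₁² = S₃ + 2S₂ + 2S₄`, `n` even).** For a pseudo-planar function `f` on
`F = 𝔽_{2^n}` with `n` even and `f(0) = 0`, the number of ordered pairs
`(x,y) ∈ S₁ × S₁` with `x + y = g` equals `1` if `g ∈ S₃`, `2` if `g ∈ S₂`, `2` if
`g ∈ S₄`, and `0` otherwise. -/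
theorem S1_sq_even
    (n : ℕ) (hn : 0 < n) (heven : Even n)
    (f : GaloisField 2 n → GaloisField 2 n)
    (hpp : ∀ ε : GaloisField 2 n, ε ≠ 0 →
      Function.Bijective (fun x => f (x + ε) + f x + ε * x))
    (hf0 : f 0 = 0) (g : GR n) :
    Nat.card {p : GR n × GR n // p.1 ∈ S1 n f ∧ p.2 ∈ S1 n f ∧ p.1 + p.2 = g} =
      if g ∈ S3 n then 1
      else if g ∈ S2 n f then 2
      else if g ∈ S4 n f then 2
      else 0 := by
  have hn' : n ≠ 0 := hn.ne'
  have h2F : (2 : GaloisField 2 n) = 0 := char2Fq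
  have base : Nat.card {p : GR n × GR n // p.1 ∈ S1 n f ∧ p.2 ∈ S1 n f ∧ p.1 + p.2 = g}
      = ({p : GR n × GR n | p.1 ∈ S1 n f ∧ p.2 ∈ S1 n f ∧ p.1 + p.2 = g}
          : Set (GR n × GR n)).ncard :=
    Nat.card_coe_set_eq _
  rw [base]
  by_cases h3 : g ∈ S3 n
  · rw [if_pos h3]
    obtain ⟨hc0, hne⟩ := (mem_S3_iff hn').mp h3
    set c := (R2.c1 g) ^ 2 ^ (n-1) with hc
    have hcsq : c ^ 2 = R2.c1 g := sqrt_sq hn' _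
    have hc1ne : R2.c1 g ≠ 0 := by
      intro h0
      apply hne
      apply R2.ext2
      · rw [hc0, R2.c0_zero]
      · rw [h0, R2.c1_zero]
    have hcne : c ≠ 0 := by
      intro h0; apply hc1ne; rw [← hcsq, h0]; ring
    have hsum : dd f c + dd f c = g := by
      apply R2.ext2
      · rw [c0_dd_add, CharTwo.add_self_eq_zero, hc0]
      · rw [c1_dd_add f hn', ← sq, hcsq, CharTwo.add_self_eq_zero, zero_add]
    have hset : {p : GR n × GR n | p.1 ∈ S1 n f ∧ p.2 ∈ S1 n f ∧ p.1 + p.2 = g}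
        = {(dd f c, dd f c)} := by
      ext p
      simp only [Set.mem_setOf_eq, Set.mem_singleton_iff]
      constructor
      · rintro ⟨h1, h2, hsum'⟩
        obtain ⟨a, ha, e1⟩ := (mem_S1_iff f hn' hf0).mp h1
        obtain ⟨b, hb, e2⟩ := (mem_S1_iff f hn' hf0).mp h2
        have hps : p = (dd f a, dd f b) := Prod.ext e1 e2
        rw [e1, e2] at hsum'
        have hba : b = a := by
          have h' := congrArg R2.c0 hsum'
          rw [c0_dd_add, hc0] at h'
          linear_combination h' - a * h2F
        subst hba
        have hac : b = c := by
          have h' := congrArg R2.c1 hsum'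
          rw [c1_dd_add f hn'] at h'
          have haa : b^2 = c^2 := by rw [hcsq]; linear_combination h' - (f b) * h2F
          have hsq0 : (b + c)^2 = 0 := by linear_combination haa + (b*c + c*c)*h2F
          have h0 := pow_eq_zero_iff (n := 2) (by norm_num) |>.mp hsq0
          linear_combination h0 - c * h2F
        rw [hps, hac]
      · intro hp
        rw [hp]
        exact ⟨(mem_S1_iff f hn' hf0).mpr ⟨c, hcne, rfl⟩,
          (mem_S1_iff f hn' hf0).mpr ⟨c, hcne, rfl⟩, hsum⟩
    rw [hset, Set.ncard_singleton]
  rw [if_neg h3]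
  by_cases h2 : g ∈ S2 n f
  · rw [if_pos h2]
    obtain ⟨s, hs1, hsg⟩ := h2
    obtain ⟨z, hz, rfl⟩ := (mem_S1_iff f hn' hf0).mp hs1
    obtain ⟨x, y, hx, hy, hxyg⟩ := exists_S2_rep f hn' heven hpp hf0 hz
    have hg' : dd f x + dd f y = g := hxyg.trans hsg
    have hc0g : R2.c0 g = z := by
      rw [← hsg, R2.c0_neg, c0_dd]
    have hxy : x ≠ y := by
      intro hxyeq
      apply hz
      have h' := congrArg R2.c0 hg'
      rw [c0_dd_add, hc0g] at h'
      rw [← h', hxyeq, CharTwo.add_self_eq_zero]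
    rw [pair_set f hn' hpp hf0 hx hy hxy hg', pair_ncard f hxy]
  rw [if_neg h2]
  by_cases h4 : g ∈ S4 n f
  · rw [if_pos h4]
    obtain ⟨hnot, u', hu', v', hv', hguv⟩ := h4
    obtain ⟨u, rfl⟩ := hu'
    obtain ⟨v, rfl⟩ := hv'
    have hguv' : g = dd f u + dd f v := hguv
    have hgne : g ≠ 0 := by
      intro h0
      exact hnot (Or.inl (Or.inl (Or.inl h0)))
    have hu0 : u ≠ 0 := by
      intro h0
      subst h0
      rw [dd_zero f hn' hf0, zero_add] at hguv'
      by_cases hv0 : v = 0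
      · subst hv0
        rw [dd_zero f hn' hf0] at hguv'
        exact hgne hguv'
      · exact hnot (Or.inl (Or.inl (Or.inr
          ((mem_S1_iff f hn' hf0).mpr ⟨v, hv0, hguv'⟩))))
    have hv0 : v ≠ 0 := by
      intro h0
      subst h0
      rw [dd_zero f hn' hf0, add_zero] at hguv'
      exact hnot (Or.inl (Or.inl (Or.inr
        ((mem_S1_iff f hn' hf0).mpr ⟨u, hu0, hguv'⟩))))
    have huv : u ≠ v := by
      intro h0
      subst h0
      apply hnot
      refine Or.inr ((mem_S3_iff hn').mpr ⟨?_, hgne⟩)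
      rw [hguv', c0_dd_add, CharTwo.add_self_eq_zero]
    rw [pair_set f hn' hpp hf0 hu0 hv0 huv hguv'.symm, pair_ncard f huv]
  rw [if_neg h4]
  have hset : {p : GR n × GR n | p.1 ∈ S1 n f ∧ p.2 ∈ S1 n f ∧ p.1 + p.2 = g}
      = (∅ : Set (GR n × GR n)) := by
    ext p
    simp only [Set.mem_setOf_eq, Set.mem_empty_iff_false, iff_false, not_and]
    intro hm1 hm2 hsum
    obtain ⟨a, ha, e1⟩ := (mem_S1_iff f hn' hf0).mp hm1
    obtain ⟨b, hb, e2⟩ := (mem_S1_iff f hn' hf0).mp hm2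
    rw [e1, e2] at hsum
    by_cases hab : a = b
    · subst hab
      apply h3
      refine (mem_S3_iff hn').mpr ⟨?_, ?_⟩
      · rw [← hsum, c0_dd_add, CharTwo.add_self_eq_zero]
      · intro h0
        apply ha
        have h' := congrArg R2.c1 (hsum.trans h0)
        rw [c1_dd_add f hn', R2.c1_zero] at h'
        have haa : a^2 = 0 := by linear_combination h' - (f a) * h2F
        exact pow_eq_zero_iff (n := 2) (by norm_num) |>.mp haa
    · apply h4
      refine ⟨?_, dd f a, dd_mem_Dset f a, dd f b, dd_mem_Dset f b, hsum.symm⟩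
      intro hmem
      rcases hmem with ((h0 | hS1) | hS2) | hS3
      · have hg0 : g = 0 := h0
        have h' := congrArg R2.c0 (hsum.trans hg0)
        rw [c0_dd_add, R2.c0_zero] at h'
        exact add_ne_zero_of_ne hab h'
      · obtain ⟨w, hw, ew⟩ := (mem_S1_iff f hn' hf0).mp hS1
        have hsum' : dd f a + dd f b = dd f w + dd f 0 := by
          rw [dd_zero f hn' hf0, add_zero, hsum, ew]
        have hc0' : a + b = w + 0 := by
          have h' := congrArg R2.c0 hsum'
          rw [c0_dd_add, c0_dd_add] at h'
          exact h'
        have hc1' : f a + f b + a * b = f w + f 0 + w * 0 := by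
          have h' := congrArg R2.c1 hsum'
          rw [c1_dd_add f hn', c1_dd_add f hn'] at h'
          exact h'
        rcases two_to_one f hpp (add_ne_zero_of_ne hab) hc0' hc1' with ⟨_, hb0⟩ | ⟨_, ha0⟩
        · exact hb hb0.symm
        · exact ha ha0.symm
      · exact h2 hS2
      · exact h3 hS3
  rw [hset, Set.ncard_empty]
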